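/- Trapping boxes in the dicritical case (Lemma 4.2(3)). Let n ∈ ℕ, δ₀ > 0, α < β, and let ξ : ℝ³ → ℝ³ be a continuous vector field in coordinates (θ, z, ρ), 2π-periodic in θ, such that on R = ℝ × [α, β] × [0, δ₀]: ξ_θ ≡ 1, ξ_ρ(θ, z, ρ) = ρⁿ·A_ρ(θ, z, ρ) and ξ_z(θ, z, ρ) = ρ^{n+1}·Ã_z(θ, z, ρ), where A_ρ and Ã_z are continuous and 2π-periodic in θ, A_ρ(θ, z, 0) = a(z) depends only on z, and a(z) < 0 for all z ∈ [α, β]. Then for every ε > 0 with α + ε < β − ε there exists δ ∈ (0, δ₀] with the following property: every integral curve γ(t) = (θ(t), z(t), ρ(t)) of ξ defined on an interval [0, T], with image contained in ℝ × [α, β] × (0, δ₀], z(0) ∈ [α + ε, β − ε] and 0 < ρ(0) ≤ δ, satisfies |z(t) − z(0)| < ε/2 and 0 < ρ(t) ≤ ρ(0) for all t ∈ [0, T]. -/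

import Mathlib

open Real Set Filter Topology

lemma eventually_lt_of_hasDerivAt_neg {f : ℝ → ℝ} {t v : ℝ} (hv : v < 0)
    (hf : HasDerivAt f v t) : ∀ᶠ u in 𝓝[>] t, f u < f t := by
  have h := (hf.hasDerivWithinAt (s := Set.Ioi t))
  have hs := hasDerivWithinAt_iff_tendsto_slope.mp h
  rw [Set.diff_singleton_eq_self (by simp)] at hs
  have hev : ∀ᶠ u in 𝓝[>] t, slope f t u < 0 := hs (Iio_mem_nhds hv)
  filter_upwards [hev, self_mem_nhdsWithin] with u hu hu'
  have htu : (0:ℝ) < u - t := sub_pos.mpr hu'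
  rw [slope_def_field] at hu
  rcases div_neg_iff.mp hu with ⟨h1, h2⟩ | ⟨h1, h2⟩
  · linarith
  · linarith

lemma no_upcross {f : ℝ → ℝ} {T K : ℝ}
    (hc : ContinuousOn f (Set.Icc 0 T))
    (hf : ∀ t ∈ Set.Icc 0 T, f t = K → ∃ v, v < 0 ∧ HasDerivAt f v t)
    (h0 : f 0 ≤ K) : ∀ t ∈ Set.Icc 0 T, f t ≤ K := by
  intro t ht
  by_contra hgt
  push_neg at hgt
  have ht0 : (0:ℝ) ≤ t := ht.1
  have hc' : ContinuousOn f (Set.Icc 0 t) := hc.mono (Set.Icc_subset_Icc le_rfl ht.2)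
  set S : Set ℝ := Set.Icc 0 t ∩ f ⁻¹' Set.Iic K with hS
  have hSclosed : IsClosed S := hc'.preimage_isClosed_of_isClosed isClosed_Icc isClosed_Iic
  have hSne : S.Nonempty := ⟨0, ⟨le_rfl, ht0⟩, h0⟩
  have hSbdd : BddAbove S := BddAbove.mono Set.inter_subset_left bddAbove_Icc
  set s := sSup S with hsdef
  have hsS : s ∈ S := hSclosed.csSup_mem hSne hSbdd
  have hst : s ≤ t := hsS.1.2
  have hs0 : (0:ℝ) ≤ s := hsS.1.1
  have hfs : f s ≤ K := hsS.2
  have hKmem : K ∈ Set.Icc (f s) (f t) := ⟨hfs, le_of_lt hgt⟩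
  obtain ⟨u, humem, hfu⟩ :=
    intermediate_value_Icc hst (hc'.mono (Set.Icc_subset_Icc hs0 le_rfl)) hKmem
  have hus : u ≤ s := le_csSup hSbdd ⟨⟨hs0.trans humem.1, humem.2⟩, le_of_eq hfu⟩
  have hueq : u = s := le_antisymm hus humem.1
  have hfsK : f s = K := hueq ▸ hfu
  have hsT : s ∈ Set.Icc 0 T := ⟨hs0, hst.trans ht.2⟩
  obtain ⟨v, hv, hder⟩ := hf s hsT hfsK
  have hev := eventually_lt_of_hasDerivAt_neg hv hder
  have hsltt : s < t := by
    rcases lt_or_eq_of_le hst with h | h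
    · exact h
    · exact absurd (h ▸ hfsK) (ne_of_gt hgt)
  have hIoc : Set.Ioc s t ∈ 𝓝[>] s := Ioc_mem_nhdsGT_of_mem ⟨le_rfl, hsltt⟩
  have hFalse : ∀ᶠ w in 𝓝[>] s, False := by
    filter_upwards [hev, hIoc] with w hw hw'
    exact absurd (le_csSup hSbdd ⟨⟨hs0.trans hw'.1.le, hw'.2⟩, le_of_lt (hfsK ▸ hw)⟩)
      (not_le.mpr hw'.1)
  obtain ⟨w, hw⟩ := hFalse.exists
  exact hw

lemma HasDerivAt.snd' {γ : ℝ → ℝ × ℝ × ℝ} {v : ℝ × ℝ × ℝ} {t : ℝ}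
    (h : HasDerivAt γ v t) : HasDerivAt (fun t => (γ t).2) v.2 t := by
  exact (ContinuousLinearMap.snd ℝ ℝ (ℝ × ℝ)).hasFDerivAt.comp_hasDerivAt t h

lemma HasDerivAt.fst' {γ : ℝ → ℝ × ℝ} {v : ℝ × ℝ} {t : ℝ}
    (h : HasDerivAt γ v t) : HasDerivAt (fun t => (γ t).1) v.1 t := by
  exact (ContinuousLinearMap.fst ℝ ℝ ℝ).hasFDerivAt.comp_hasDerivAt t h

lemma HasDerivAt.snd'' {γ : ℝ → ℝ × ℝ} {v : ℝ × ℝ} {t : ℝ}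
    (h : HasDerivAt γ v t) : HasDerivAt (fun t => (γ t).2) v.2 t := by
  exact (ContinuousLinearMap.snd ℝ ℝ ℝ).hasFDerivAt.comp_hasDerivAt t h

theorem trapping_boxes_dicritical
    (n : ℕ) (δ₀ : ℝ) (hδ₀ : 0 < δ₀) (α β : ℝ) (hαβ : α < β)
    (ξ : ℝ × ℝ × ℝ → ℝ × ℝ × ℝ) (hξ : Continuous ξ)
    (hper : ∀ θ z ρ : ℝ, ξ (θ + 2 * π, z, ρ) = ξ (θ, z, ρ))
    (Aρ Az : ℝ × ℝ × ℝ → ℝ) (hAρ : Continuous Aρ) (hAz : Continuous Az)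
    (hAρper : ∀ θ z ρ : ℝ, Aρ (θ + 2 * π, z, ρ) = Aρ (θ, z, ρ))
    (hAzper : ∀ θ z ρ : ℝ, Az (θ + 2 * π, z, ρ) = Az (θ, z, ρ))
    (a : ℝ → ℝ) (hAρ0 : ∀ θ z : ℝ, Aρ (θ, z, 0) = a z)
    (haneg : ∀ z ∈ Set.Icc α β, a z < 0)
    (hξθ : ∀ θ : ℝ, ∀ z ∈ Set.Icc α β, ∀ ρ ∈ Set.Icc (0 : ℝ) δ₀, (ξ (θ, z, ρ)).1 = 1)
    (hξρ : ∀ θ : ℝ, ∀ z ∈ Set.Icc α β, ∀ ρ ∈ Set.Icc (0 : ℝ) δ₀,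
      (ξ (θ, z, ρ)).2.2 = ρ ^ n * Aρ (θ, z, ρ))
    (hξz : ∀ θ : ℝ, ∀ z ∈ Set.Icc α β, ∀ ρ ∈ Set.Icc (0 : ℝ) δ₀,
      (ξ (θ, z, ρ)).2.1 = ρ ^ (n + 1) * Az (θ, z, ρ)) :
    ∀ ε > 0, α + ε < β - ε →
      ∃ δ, 0 < δ ∧ δ ≤ δ₀ ∧
        ∀ (γ : ℝ → ℝ × ℝ × ℝ) (T : ℝ), 0 ≤ T →
          (∀ t ∈ Set.Icc 0 T, HasDerivAt γ (ξ (γ t)) t) →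
          (∀ t ∈ Set.Icc 0 T, (γ t).2.1 ∈ Set.Icc α β ∧ (γ t).2.2 ∈ Set.Ioc 0 δ₀) →
          (γ 0).2.1 ∈ Set.Icc (α + ε) (β - ε) → 0 < (γ 0).2.2 → (γ 0).2.2 ≤ δ →
          ∀ t ∈ Set.Icc 0 T,
            |(γ t).2.1 - (γ 0).2.1| < ε / 2 ∧ 0 < (γ t).2.2 ∧ (γ t).2.2 ≤ (γ 0).2.2 := by
  intro ε hε hεαβ
  -- `a` is continuous
  have haeq : a = fun w => Aρ (0, w, 0) := funext fun w => (hAρ0 0 w).symm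
  have hacont : Continuous a := by
    rw [haeq]; exact hAρ.comp (by fun_prop)
  -- max of `a` gives uniform negativity constant `c`
  have hne : (Set.Icc α β).Nonempty := ⟨α, le_rfl, hαβ.le⟩
  obtain ⟨z₀, hz₀mem, hz₀max⟩ := isCompact_Icc.exists_isMaxOn hne hacont.continuousOn
  set c : ℝ := -a z₀ / 2 with hc
  have hcpos : 0 < c := by have := haneg z₀ hz₀mem; rw [hc]; linarith
  have hamax : ∀ w ∈ Set.Icc α β, a w ≤ -(2*c) := by
    intro w hw
    have := hz₀max hw
    simp only [Set.mem_setOf_eq] at this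
    rw [hc]; linarith
  -- thickening argument: Aρ < -c on a neighborhood of ρ = 0
  set K₀ : Set (ℝ × ℝ × ℝ) := Set.Icc 0 (2*π) ×ˢ (Set.Icc α β ×ˢ ({0} : Set ℝ)) with hK₀def
  have hK₀ : IsCompact K₀ := isCompact_Icc.prod (isCompact_Icc.prod isCompact_singleton)
  have hUopen : IsOpen (Aρ ⁻¹' Set.Iio (-c)) := isOpen_Iio.preimage hAρ
  have hK₀U : K₀ ⊆ Aρ ⁻¹' Set.Iio (-c) := by
    rintro ⟨θ, w, ρ'⟩ ⟨hθ, hw, hρ'⟩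
    simp only [Set.mem_singleton_iff] at hρ'
    subst hρ'
    have := hamax w hw
    simp only [Set.mem_preimage, Set.mem_Iio, hAρ0]
    linarith
  obtain ⟨r, hrpos, hthick⟩ := hK₀.exists_thickening_subset_open hUopen hK₀U
  have hAρbound : ∀ θ w ρ', w ∈ Set.Icc α β → 0 ≤ ρ' → ρ' ≤ r/2 → Aρ (θ, w, ρ') < -c := by
    intro θ w ρ' hw hρ0' hρr
    have hperA : Function.Periodic (fun θ => Aρ (θ, w, ρ')) (2*π) := fun x => hAρper x w ρ'
    obtain ⟨y, hy, hval⟩ := hperA.exists_mem_Ico₀ Real.two_pi_pos θ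
    have hval' : Aρ (θ, w, ρ') = Aρ (y, w, ρ') := hval
    rw [hval']
    have hmem : (y, w, ρ') ∈ Metric.thickening r K₀ := by
      rw [Metric.mem_thickening_iff]
      refine ⟨(y, w, 0), ⟨⟨hy.1, hy.2.le⟩, hw, rfl⟩, ?_⟩
      have hd : dist ((y, w, ρ') : ℝ × ℝ × ℝ) (y, w, 0) = ρ' := by
        simp [Prod.dist_eq, Real.dist_eq, abs_of_nonneg hρ0', max_eq_right hρ0']
      rw [hd]; linarith
    exact hthick hmem
  -- uniform bound `M` for `Az`
  set K : Set (ℝ × ℝ × ℝ) := Set.Icc 0 (2*π) ×ˢ (Set.Icc α β ×ˢ Set.Icc 0 δ₀) with hKdef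
  have hK : IsCompact K := isCompact_Icc.prod (isCompact_Icc.prod isCompact_Icc)
  obtain ⟨M, hM⟩ := hK.exists_bound_of_continuousOn hAz.continuousOn
  have hM0 : 0 ≤ M :=
    le_trans (norm_nonneg (Az (0, α, 0)))
      (hM _ ⟨⟨le_rfl, Real.two_pi_pos.le⟩, ⟨le_rfl, hαβ.le⟩, le_rfl, hδ₀.le⟩)
  have hAzbound : ∀ θ w ρ', w ∈ Set.Icc α β → ρ' ∈ Set.Icc 0 δ₀ → |Az (θ, w, ρ')| ≤ M := by
    intro θ w ρ' hw hρ'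
    have hperA : Function.Periodic (fun θ => Az (θ, w, ρ')) (2*π) := fun x => hAzper x w ρ'
    obtain ⟨y, hy, hval⟩ := hperA.exists_mem_Ico₀ Real.two_pi_pos θ
    have hval' : Az (θ, w, ρ') = Az (y, w, ρ') := hval
    rw [hval']
    have := hM (y, w, ρ') ⟨⟨hy.1, hy.2.le⟩, hw, hρ'⟩
    simpa [Real.norm_eq_abs] using this
  -- choice of δ
  set d : ℝ := Real.sqrt (c * ε / (2 * (M + 1))) with hd
  have hdpos : 0 < d := Real.sqrt_pos.mpr (by positivity)
  set δ : ℝ := min (min δ₀ (r/2)) d with hδdef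
  have hδpos : 0 < δ := lt_min (lt_min hδ₀ (by linarith)) hdpos
  have hδδ₀ : δ ≤ δ₀ := (min_le_left _ _).trans (min_le_left _ _)
  have hδr : δ ≤ r/2 := (min_le_left _ _).trans (min_le_right _ _)
  have hδd : δ ≤ d := min_le_right _ _
  have hkey : M * δ^2 / c < ε / 2 := by
    have hsq : d^2 = c * ε / (2 * (M + 1)) := by
      rw [sq]; exact Real.mul_self_sqrt (by positivity)
    have h1 : δ^2 ≤ c * ε / (2 * (M + 1)) := by
      rw [← hsq]; nlinarith [hδd, hδpos.le]
    rw [div_lt_iff₀ hcpos]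
    have h2 : M * δ^2 ≤ M * (c * ε / (2 * (M + 1))) := by
      exact mul_le_mul_of_nonneg_left h1 hM0
    have h3 : M * (c * ε / (2 * (M + 1))) < c * ε / 2 := by
      rw [mul_div_assoc', div_lt_div_iff₀ (by positivity) (by norm_num : (0:ℝ) < 2)]
      nlinarith [mul_pos hcpos hε]
    nlinarith [h2, h3]
  refine ⟨δ, hδpos, hδδ₀, ?_⟩
  intro γ T hT hderiv hbox hz0mem hρ0pos hρ0δ
  set z : ℝ → ℝ := fun t => (γ t).2.1 with hzdef
  set ρf : ℝ → ℝ := fun t => (γ t).2.2 with hρdef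
  have hzD : ∀ t ∈ Set.Icc 0 T, HasDerivAt z ((ξ (γ t)).2.1) t :=
    fun t ht => ((hderiv t ht).snd').fst'
  have hρD : ∀ t ∈ Set.Icc 0 T, HasDerivAt ρf ((ξ (γ t)).2.2) t :=
    fun t ht => ((hderiv t ht).snd').snd''
  have hγeta : ∀ t, ((γ t).1, (γ t).2.1, (γ t).2.2) = γ t := fun t => by simp
  have hξρ' : ∀ t ∈ Set.Icc 0 T, (ξ (γ t)).2.2 = (ρf t)^n * Aρ (γ t) := by
    intro t ht
    have hb := hbox t ht
    have h := hξρ (γ t).1 _ hb.1 _ (Set.mem_Icc.mpr ⟨hb.2.1.le, hb.2.2⟩)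
    rw [hγeta t] at h
    exact h
  have hξz' : ∀ t ∈ Set.Icc 0 T, (ξ (γ t)).2.1 = (ρf t)^(n+1) * Az (γ t) := by
    intro t ht
    have hb := hbox t ht
    have h := hξz (γ t).1 _ hb.1 _ (Set.mem_Icc.mpr ⟨hb.2.1.le, hb.2.2⟩)
    rw [hγeta t] at h
    exact h
  have hρcont : ContinuousOn ρf (Set.Icc 0 T) :=
    fun t ht => ((hρD t ht).continuousAt).continuousWithinAt
  have hzcont : ContinuousOn z (Set.Icc 0 T) :=
    fun t ht => ((hzD t ht).continuousAt).continuousWithinAt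
  -- step (a): ρ is trapped below its initial value
  have hρle : ∀ t ∈ Set.Icc 0 T, ρf t ≤ ρf 0 := by
    apply no_upcross hρcont _ le_rfl
    intro t ht hfeq
    have hb := hbox t ht
    have hρpos : 0 < ρf t := hb.2.1
    refine ⟨(ρf t)^n * Aρ (γ t), ?_, by rw [← hξρ' t ht]; exact hρD t ht⟩
    have hρδ2 : ρf t ≤ r/2 := by
      rw [hfeq]; exact le_trans hρ0δ hδr
    have hA : Aρ (γ t) < -c := by
      have h := hAρbound (γ t).1 (γ t).2.1 (γ t).2.2 hb.1 hρpos.le hρδ2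
      rwa [hγeta t] at h
    have hpn : (0:ℝ) < (ρf t)^n := pow_pos hρpos n
    exact mul_neg_of_pos_of_neg hpn (hA.trans (by linarith))
  -- step (b): z moves very little
  set C : ℝ := M * δ / c with hC
  have hC0 : 0 ≤ C := by positivity
  have hCc : C * c = M * δ := div_mul_cancel₀ _ (ne_of_gt hcpos)
  have hbound : ∀ x ∈ Set.Icc 0 T,
      ((ρf x)^(n+1) * Az (γ x) ≤ C * -(ξ (γ x)).2.2 ∧
       C * (ξ (γ x)).2.2 ≤ (ρf x)^(n+1) * Az (γ x)) := by
    intro x hx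
    have hb := hbox x hx
    have hρpos : 0 < ρf x := hb.2.1
    have hρδ : ρf x ≤ δ := le_trans (hρle x hx) hρ0δ
    have hA : Aρ (γ x) < -c := by
      have h := hAρbound (γ x).1 (γ x).2.1 (γ x).2.2 hb.1 hρpos.le (hρδ.trans hδr)
      rwa [hγeta x] at h
    have hAzb : |Az (γ x)| ≤ M := by
      have h := hAzbound (γ x).1 (γ x).2.1 (γ x).2.2 hb.1
        (Set.mem_Icc.mpr ⟨hρpos.le, hb.2.2⟩)
      rwa [hγeta x] at h
    obtain ⟨hAz1, hAz2⟩ := abs_le.mp hAzb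
    have hpn : (0:ℝ) < (ρf x)^n := pow_pos hρpos n
    rw [hξρ' x hx]
    have hps : (ρf x)^(n+1) = (ρf x)^n * ρf x := pow_succ _ _
    have e1 : (ρf x)^n * ρf x * Az (γ x) ≤ (ρf x)^n * ρf x * M :=
      mul_le_mul_of_nonneg_left hAz2 (mul_pos hpn hρpos).le
    have e1' : (ρf x)^n * ρf x * (-M) ≤ (ρf x)^n * ρf x * Az (γ x) :=
      mul_le_mul_of_nonneg_left hAz1 (mul_pos hpn hρpos).le
    have e2 : (ρf x)^n * ρf x * M ≤ (ρf x)^n * δ * M :=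
      mul_le_mul_of_nonneg_right (mul_le_mul_of_nonneg_left hρδ hpn.le) hM0
    have e3 : C * (ρf x)^n * Aρ (γ x) ≤ C * (ρf x)^n * (-c) :=
      mul_le_mul_of_nonneg_left hA.le (mul_nonneg hC0 hpn.le)
    have e4 : C * (ρf x)^n * (-c) = -((ρf x)^n * δ * M) := by
      linear_combination (-((ρf x)^n)) * hCc
    have e5 : C * -((ρf x)^n * Aρ (γ x)) = -(C * (ρf x)^n * Aρ (γ x)) := by ring
    have e6 : C * ((ρf x)^n * Aρ (γ x)) = C * (ρf x)^n * Aρ (γ x) := by ring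
    have e7 : (ρf x)^n * ρf x * (-M) = -((ρf x)^n * ρf x * M) := by ring
    constructor
    · rw [hps]
      linarith
    · rw [hps]
      linarith
  have hφmono : AntitoneOn (fun t => z t + C * ρf t) (Set.Icc 0 T) := by
    apply antitoneOn_of_deriv_nonpos (convex_Icc 0 T)
    · exact hzcont.add (hρcont.const_smul C)
    · intro x hx
      rw [interior_Icc] at hx
      have hx' : x ∈ Set.Icc 0 T := Set.Ioo_subset_Icc_self hx
      exact ((hzD x hx').add ((hρD x hx').const_mul C)).differentiableAt.differentiableWithinAt
    · intro x hx
      rw [interior_Icc] at hx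
      have hx' : x ∈ Set.Icc 0 T := Set.Ioo_subset_Icc_self hx
      have hD : HasDerivAt (fun t => z t + C * ρf t)
          ((ξ (γ x)).2.1 + C * (ξ (γ x)).2.2) x :=
        (hzD x hx').add ((hρD x hx').const_mul C)
      rw [hD.deriv, hξz' x hx']
      have := (hbound x hx').1
      linarith
  have hψmono : MonotoneOn (fun t => z t - C * ρf t) (Set.Icc 0 T) := by
    apply monotoneOn_of_deriv_nonneg (convex_Icc 0 T)
    · exact hzcont.sub (hρcont.const_smul C)
    · intro x hx
      rw [interior_Icc] at hx
      have hx' : x ∈ Set.Icc 0 T := Set.Ioo_subset_Icc_self hx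
      exact ((hzD x hx').sub ((hρD x hx').const_mul C)).differentiableAt.differentiableWithinAt
    · intro x hx
      rw [interior_Icc] at hx
      have hx' : x ∈ Set.Icc 0 T := Set.Ioo_subset_Icc_self hx
      have hD : HasDerivAt (fun t => z t - C * ρf t)
          ((ξ (γ x)).2.1 - C * (ξ (γ x)).2.2) x :=
        (hzD x hx').sub ((hρD x hx').const_mul C)
      rw [hD.deriv, hξz' x hx']
      have := (hbound x hx').2
      linarith
  intro t ht
  have hb := hbox t ht
  have h0T : (0:ℝ) ∈ Set.Icc 0 T := ⟨le_rfl, hT⟩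
  have hρt := hρle t ht
  refine ⟨?_, hb.2.1, hρt⟩
  have hρtpos : 0 < ρf t := hb.2.1
  have h1 : z t + C * ρf t ≤ z 0 + C * ρf 0 := hφmono h0T ht ht.1
  have h2 : z 0 - C * ρf 0 ≤ z t - C * ρf t := hψmono h0T ht ht.1
  have hCρt : 0 ≤ C * ρf t := mul_nonneg hC0 hρtpos.le
  have hCρ0 : C * ρf 0 ≤ C * δ := mul_le_mul_of_nonneg_left hρ0δ hC0
  have hCδ : C * δ = M * δ^2 / c := by rw [hC]; ring
  show |z t - z 0| < ε / 2
  rw [abs_sub_lt_iff]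
  constructor <;> linarith
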